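/- Let v be a weight function satisfying the doubling condition, and let g(x)=v(1-1/x). Let (n_k)_{k≥1} be a Hadamard gap sequence with ratio λ > 1 and let a_{n_k} ∈ ℂ. Suppose there exists γ > 0 such that ∑_{k : n_k ≤ N} |a_{n_k}| ≤ γ g(N) for every positive integer N. Then the series u(z) = Re ∑_k a_{n_k} z^{n_k} converges for all z in the open unit disk and there exists C > 0 such that |u(z)| ≤ C v(|z|) for all z in the disk. -/

import Mathlib

open Finset

lemma aux_double (v : ℝ → ℝ) (D : ℝ)
    (hdbl : ∀ d ∈ Set.Ioc (0:ℝ) (1/2:ℝ), v (1 - d) ≤ D * v (1 - 2*d))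
    (hD : 0 < D) :
    ∀ (j : ℕ) (y : ℝ), 1 ≤ y → v (1 - 1/(2^j * y)) ≤ D^j * v (1 - 1/y) := by
  intro j
  induction j with
  | zero => intro y hy; simp
  | succ j ih =>
    intro y hy
    have hy0 : (0:ℝ) < y := lt_of_lt_of_le one_pos hy
    have h2pow : (2:ℝ) ≤ 2^(j+1) := by
      calc (2:ℝ) = 2^1 := (pow_one 2).symm
      _ ≤ 2^(j+1) := pow_le_pow_right₀ one_le_two (Nat.le_add_left 1 j)
    have h2 : (2:ℝ) ≤ 2^(j+1) * y := by nlinarith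
    have hd : 1/(2^(j+1) * y) ∈ Set.Ioc (0:ℝ) (1/2) := by
      constructor
      · positivity
      · rw [div_le_div_iff₀ (by linarith) two_pos]
        linarith
    have key := hdbl _ hd
    have harg : 1 - 2 * (1/(2^(j+1) * y)) = 1 - 1/(2^j * y) := by
      rw [pow_succ]
      field_simp
    rw [harg] at key
    calc v (1 - 1/(2^(j+1)*y)) ≤ D * v (1 - 1/(2^j * y)) := key
      _ ≤ D * (D^j * v (1 - 1/y)) := mul_le_mul_of_nonneg_left (ih y hy) hD.le
      _ = D^(j+1) * v (1 - 1/y) := by ring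

/-
STATEMENT 2

v is a weight function satisfying the doubling condition, g(x) = v(1-1/x),
(n_k) is a Hadamard gap sequence with ratio λ > 1, and the coefficients satisfy
∑_{k : n_k ≤ N} |a_{n_k}| ≤ γ g(N) for all N ≥ 1.  Then the gap series
∑_k a_{n_k} z^{n_k} converges on the unit disk and u = Re of it satisfies
|u(z)| ≤ C v(|z|) for some C > 0.
-/
set_option maxHeartbeats 2000000 in
theorem stmt_2
    (v : ℝ → ℝ)
    (hv_pos : ∀ r ∈ Set.Ico (0:ℝ) 1, 0 < v r)
    (hv_mono : StrictMonoOn v (Set.Ico (0:ℝ) 1))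
    (hv_cont : ContinuousOn v (Set.Ico (0:ℝ) 1))
    (hv_zero : v 0 = 1)
    (hv_top : Filter.Tendsto v (nhdsWithin 1 (Set.Iio (1:ℝ))) Filter.atTop)
    (D : ℝ) (hD : 1 < D)
    (hdbl : ∀ d ∈ Set.Ioc (0:ℝ) (1/2:ℝ), v (1 - d) ≤ D * v (1 - 2*d))
    (g : ℝ → ℝ) (hg : ∀ x, g x = v (1 - 1/x))
    (lam : ℝ) (hlam : 1 < lam)
    (n : ℕ → ℕ) (hn : ∀ k, 0 < n k)
    (hgap : ∀ k, lam * (n k : ℝ) ≤ (n (k+1) : ℝ))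
    (a : ℕ → ℂ)
    (γ : ℝ) (hγ : 0 < γ)
    (hcoef : ∀ N : ℕ, 1 ≤ N →
      ∑ k ∈ Finset.filter (fun k => n k ≤ N) (Finset.range (N + 1)),
        ‖a k‖ ≤ γ * g N) :
    (∀ z ∈ Metric.ball (0:ℂ) 1, Summable (fun k : ℕ => a k * z ^ (n k))) ∧
    ∃ C > 0, ∀ z ∈ Metric.ball (0:ℂ) 1,
      |(∑' k : ℕ, a k * z ^ (n k)).re| ≤ C * v (‖z‖) := by
  have hVmono : MonotoneOn v (Set.Ico (0:ℝ) 1) := hv_mono.monotoneOn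
  have hD0 : (0:ℝ) < D := lt_trans one_pos hD
  obtain ⟨K, hK⟩ : ∃ K : ℕ, D ≤ 2^K := by
    obtain ⟨K, hK⟩ := pow_unbounded_of_one_lt D one_lt_two
    exact ⟨K, hK.le⟩
  set C0 : ℝ := D * (1 + 2^K * (K.factorial : ℝ) * 4) with hC0
  have hC0pos : 0 < C0 := by positivity
  set C : ℝ := γ * C0 with hCdef
  have hCpos : 0 < C := by positivity
  -- k < n k
  have hk_lt : ∀ k, k < n k := by
    intro k
    induction k with
    | zero => exact hn 0
    | succ k ih =>
      have h1 : (n k : ℝ) < lam * n k := by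
        have : (0:ℝ) < (n k : ℝ) := by exact_mod_cast hn k
        nlinarith
      have h2 : n k < n (k+1) := by exact_mod_cast lt_of_lt_of_le h1 (hgap k)
      omega
  -- key uniform partial-sum bound
  have key : ∀ z ∈ Metric.ball (0:ℂ) 1, ∀ m : ℕ,
      ∑ k ∈ Finset.range m, ‖a k‖ * ‖z‖ ^ (n k)
        ≤ C * v (‖z‖) := by
    intro z hz m
    set r := ‖z‖ with hrdef
    have hr0 : 0 ≤ r := norm_nonneg z
    have hr1 : r < 1 := by simpa [hrdef] using hz
    set s : ℝ := 1 - r with hsdef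
    have hs0 : 0 < s := by simp only [hsdef]; linarith
    have hs1 : s ≤ 1 := by simp only [hsdef]; linarith
    have hrIco : r ∈ Set.Ico (0:ℝ) 1 := ⟨hr0, hr1⟩
    have hvr : 0 < v r := hv_pos r hrIco
    -- pointwise claim
    have claimC : ∀ N : ℕ, 1 ≤ N → g N ≤ D * (1 + ((N:ℝ)*s)^K) * v r := by
      intro N hN
      have hx1 : (1:ℝ) ≤ (N:ℝ) := by exact_mod_cast hN
      have hx0 : (0:ℝ) < (N:ℝ) := lt_of_lt_of_le one_pos hx1
      have hDfac : 1 ≤ D * (1 + ((N:ℝ)*s)^K) := by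
        have h1 : (0:ℝ) ≤ ((N:ℝ)*s)^K := by positivity
        nlinarith
      rw [hg]
      by_cases hcase : (N:ℝ) * s ≤ 1
      · have h1 : s ≤ 1/(N:ℝ) := by rw [le_div_iff₀ hx0]; linarith
        have harg1 : (1 - 1/(N:ℝ)) ∈ Set.Ico (0:ℝ) 1 := by
          constructor
          · have : 1/(N:ℝ) ≤ 1 := by rw [div_le_one hx0]; exact hx1
            linarith
          · have : 0 < 1/(N:ℝ) := by positivity
            linarith
        have hle : v (1 - 1/(N:ℝ)) ≤ v r := by
          apply hVmono harg1 hrIco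
          simp only [hsdef] at h1
          linarith
        calc v (1-1/(N:ℝ)) ≤ v r := hle
          _ ≤ D * (1 + ((N:ℝ)*s)^K) * v r := le_mul_of_one_le_left hvr.le hDfac
      · push_neg at hcase
        set M : ℝ := 1/s with hMdef
        have hM1 : 1 ≤ M := by rw [le_div_iff₀ hs0]; linarith
        have hM0 : 0 < M := lt_of_lt_of_le one_pos hM1
        have hMs : M * s = 1 := by rw [hMdef]; exact one_div_mul_cancel hs0.ne'
        have hMr : 1 - 1/M = r := by
          rw [hMdef, one_div_one_div]; simp [hsdef]
        have hex : ∃ j : ℕ, (N:ℝ) ≤ 2^j * M := by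
          obtain ⟨j, hj⟩ := pow_unbounded_of_one_lt (N:ℝ) one_lt_two
          exact ⟨j, le_trans hj.le (le_mul_of_one_le_right (by positivity) hM1)⟩
        set j0 := Nat.find hex with hj0def
        have hspec : (N:ℝ) ≤ 2^j0 * M := Nat.find_spec hex
        have h2j0M : (1:ℝ) ≤ 2^j0 * M := le_trans hx1 hspec
        have hj0ne : j0 ≠ 0 := by
          intro h
          rw [h] at hspec
          simp only [pow_zero, one_mul] at hspec
          nlinarith
        obtain ⟨i, hi⟩ := Nat.exists_eq_succ_of_ne_zero hj0ne
        have hmin : ¬ ((N:ℝ) ≤ 2^i * M) := by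
          have := Nat.find_min hex (m := i) (by omega)
          exact this
        push_neg at hmin
        have h2i : (2:ℝ)^i ≤ (N:ℝ) * s := by
          have h := mul_lt_mul_of_pos_right hmin hs0
          rw [mul_assoc, hMs, mul_one] at h
          exact h.le
        have hmono1 : v (1 - 1/(N:ℝ)) ≤ v (1 - 1/(2^j0 * M)) := by
          apply hVmono
          · constructor
            · have : 1/(N:ℝ) ≤ 1 := by rw [div_le_one hx0]; exact hx1
              linarith
            · have : 0 < 1/(N:ℝ) := by positivity
              linarith
          · constructor
            · have : 1/((2:ℝ)^j0 * M) ≤ 1 := by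
                rw [div_le_one (by positivity)]; exact h2j0M
              linarith
            · have : 0 < 1/((2:ℝ)^j0 * M) := by positivity
              linarith
          · have : 1/((2:ℝ)^j0 * M) ≤ 1/(N:ℝ) :=
              one_div_le_one_div_of_le hx0 hspec
            linarith
        have hiter := aux_double v D hdbl hD0 j0 M hM1
        rw [hMr] at hiter
        have hDj : D^j0 ≤ D * ((N:ℝ)*s)^K := by
          rw [hi, pow_succ']
          apply mul_le_mul_of_nonneg_left _ hD0.le
          calc D^i ≤ ((2:ℝ)^K)^i := pow_le_pow_left₀ hD0.le hK i
            _ = ((2:ℝ)^i)^K := by rw [← pow_mul, ← pow_mul, Nat.mul_comm]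
            _ ≤ ((N:ℝ)*s)^K := pow_le_pow_left₀ (by positivity) h2i K
        calc v (1 - 1/(N:ℝ)) ≤ v (1 - 1/(2^j0 * M)) := hmono1
          _ ≤ D^j0 * v r := hiter
          _ ≤ (D * ((N:ℝ)*s)^K) * v r := mul_le_mul_of_nonneg_right hDj hvr.le
          _ ≤ D * (1 + ((N:ℝ)*s)^K) * v r := by nlinarith
    -- step B : finite weighted geometric sums
    have stepB : ∀ P : ℕ, s * ∑ N ∈ Finset.Icc 1 P, g N * r^N ≤ C0 * v r := by
      intro P
      have geom : ∀ (x : ℝ), 0 ≤ x → x < 1 → ∀ P : ℕ,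
          ∑ N ∈ Finset.Icc 1 P, x^N ≤ 1/(1-x) := by
        intro x hx0 hx1 P
        have hsub : Finset.Icc 1 P ⊆ Finset.range (P+1) := by
          intro N hN
          simp only [Finset.mem_Icc] at hN
          simp only [Finset.mem_range]
          omega
        have h1 : ∑ N ∈ Finset.Icc 1 P, x^N ≤ ∑ N ∈ Finset.range (P+1), x^N :=
          Finset.sum_le_sum_of_subset_of_nonneg hsub (fun i _ _ => pow_nonneg hx0 i)
        have h2 : ∑ N ∈ Finset.range (P+1), x^N ≤ 1/(1-x) := by
          have hgm := geom_sum_mul x (P+1)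
          have hx1' : 0 < 1 - x := by linarith
          rw [le_div_iff₀ hx1']
          nlinarith [pow_nonneg hx0 (P+1)]
        linarith
      set q : ℝ := Real.exp (-(s/2)) with hqdef
      have hq0 : 0 < q := Real.exp_pos _
      have hq1 : q < 1 := by
        rw [hqdef, Real.exp_lt_one_iff]
        linarith
      have hqs : q ≤ 1 - s/4 := by
        have he : s/2 + 1 ≤ Real.exp (s/2) := Real.add_one_le_exp (s/2)
        have hq' : q * Real.exp (s/2) = 1 := by
          rw [hqdef, ← Real.exp_add]
          simp
        have hE : 0 < Real.exp (s/2) := Real.exp_pos _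
        have h2 : (1:ℝ) ≤ (1 - s/4) * (s/2 + 1) := by nlinarith
        have h3 : (1 - s/4) * (s/2 + 1) ≤ (1 - s/4) * Real.exp (s/2) :=
          mul_le_mul_of_nonneg_left he (by linarith)
        have key : q * Real.exp (s/2) ≤ (1 - s/4) * Real.exp (s/2) := by
          rw [hq']
          linarith
        exact le_of_mul_le_mul_right key hE
      have hpt2 : ∀ N : ℕ, ((N:ℝ)*s)^K * r^N ≤ 2^K * (K.factorial : ℝ) * q^N := by
        intro N
        have hrexp : r ≤ Real.exp (-s) := by
          have := Real.add_one_le_exp (-s)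
          simp only [hsdef]
          linarith
        have hrN : r^N ≤ Real.exp (-s)^N := pow_le_pow_left₀ hr0 hrexp N
        have hfact : ((N:ℝ)*s/2)^K / (K.factorial : ℝ) ≤ Real.exp ((N:ℝ)*s/2) :=
          Real.pow_div_factorial_le_exp (x := (N:ℝ)*s/2)
            (div_nonneg (mul_nonneg (Nat.cast_nonneg N) hs0.le) (by norm_num)) K
        have hKfac : (0:ℝ) < (K.factorial : ℝ) := by
          exact_mod_cast K.factorial_pos
        have h1 : ((N:ℝ)*s)^K ≤ 2^K * (K.factorial : ℝ) * Real.exp ((N:ℝ)*s/2) := by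
          rw [div_le_iff₀ hKfac] at hfact
          calc ((N:ℝ)*s)^K = 2^K * ((N:ℝ)*s/2)^K := by
                rw [← mul_pow]
                congr 1
                ring
            _ ≤ 2^K * (Real.exp ((N:ℝ)*s/2) * (K.factorial : ℝ)) :=
                mul_le_mul_of_nonneg_left hfact (by positivity)
            _ = 2^K * (K.factorial : ℝ) * Real.exp ((N:ℝ)*s/2) := by ring
        have hqN : Real.exp ((N:ℝ)*s/2) * Real.exp (-s)^N = q^N := by
          rw [hqdef, ← Real.exp_nat_mul, ← Real.exp_nat_mul, ← Real.exp_add]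
          congr 1
          ring
        calc ((N:ℝ)*s)^K * r^N
            ≤ (2^K * (K.factorial : ℝ) * Real.exp ((N:ℝ)*s/2)) * Real.exp (-s)^N := by
              apply mul_le_mul h1 hrN (pow_nonneg hr0 N) (by positivity)
          _ = 2^K * (K.factorial : ℝ) * (Real.exp ((N:ℝ)*s/2) * Real.exp (-s)^N) := by ring
          _ = 2^K * (K.factorial : ℝ) * q^N := by rw [hqN]
      have hsum1 : ∑ N ∈ Finset.Icc 1 P, g N * r^N
          ≤ D * v r * (∑ N ∈ Finset.Icc 1 P, r^N)
            + (D * v r * (2^K * (K.factorial : ℝ))) * (∑ N ∈ Finset.Icc 1 P, q^N) := by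
        rw [Finset.mul_sum, Finset.mul_sum, ← Finset.sum_add_distrib]
        apply Finset.sum_le_sum
        intro N hN
        have hN1 : 1 ≤ N := (Finset.mem_Icc.mp hN).1
        have hc := claimC N hN1
        have h2 := hpt2 N
        have hrN : (0:ℝ) ≤ r^N := pow_nonneg hr0 N
        calc g ↑N * r^N ≤ (D * (1 + ((N:ℝ)*s)^K) * v r) * r^N :=
              mul_le_mul_of_nonneg_right hc hrN
          _ = D * v r * r^N + (D * v r) * (((N:ℝ)*s)^K * r^N) := by ring
          _ ≤ D * v r * r^N + (D * v r) * (2^K * (K.factorial : ℝ) * q^N) := by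
              have := mul_le_mul_of_nonneg_left h2 (by positivity : (0:ℝ) ≤ D * v r)
              linarith
          _ = D * v r * r^N + D * v r * (2^K * (K.factorial : ℝ)) * q^N := by ring
      have hSr : s * (∑ N ∈ Finset.Icc 1 P, r^N) ≤ 1 := by
        have h := geom r hr0 hr1 P
        calc s * (∑ N ∈ Finset.Icc 1 P, r^N) ≤ s * (1/(1-r)) :=
              mul_le_mul_of_nonneg_left h hs0.le
          _ = 1 := by
              rw [hsdef]
              field_simp
              exact div_self (ne_of_gt (by linarith))
      have hSq : s * (∑ N ∈ Finset.Icc 1 P, q^N) ≤ 4 := by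
        have h := geom q hq0.le hq1 P
        have h4 : 1/(1-q) ≤ 4/s := by
          rw [div_le_div_iff₀ (by linarith) hs0]
          nlinarith
        calc s * (∑ N ∈ Finset.Icc 1 P, q^N) ≤ s * (4/s) := by
              apply mul_le_mul_of_nonneg_left (le_trans h h4) hs0.le
          _ = 4 := by field_simp
      have hpos1 : (0:ℝ) ≤ D * v r := by positivity
      have hpos2 : (0:ℝ) ≤ D * v r * (2^K * (K.factorial : ℝ)) := by positivity
      calc s * ∑ N ∈ Finset.Icc 1 P, g N * r^N
          ≤ s * (D * v r * (∑ N ∈ Finset.Icc 1 P, r^N)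
              + (D * v r * (2^K * (K.factorial : ℝ))) * (∑ N ∈ Finset.Icc 1 P, q^N)) :=
            mul_le_mul_of_nonneg_left hsum1 hs0.le
        _ = D * v r * (s * (∑ N ∈ Finset.Icc 1 P, r^N))
              + (D * v r * (2^K * (K.factorial : ℝ))) * (s * (∑ N ∈ Finset.Icc 1 P, q^N)) := by
            ring
        _ ≤ D * v r * 1 + (D * v r * (2^K * (K.factorial : ℝ))) * 4 := by
            exact add_le_add (mul_le_mul_of_nonneg_left hSr hpos1)
              (mul_le_mul_of_nonneg_left hSq hpos2)
        _ = C0 * v r := by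
            rw [hC0]
            ring
    -- per-P bound
    have perP : ∀ P : ℕ, ∑ k ∈ Finset.range m, ‖a k‖ * r ^ (n k)
        ≤ C * v r + (∑ k ∈ Finset.range m, ‖a k‖) * r^(P+1) := by
      intro P
      have hpt : ∀ k : ℕ, r^(n k) ≤ s * (∑ N ∈ Finset.Icc (n k) P, r^N) + r^(P+1) := by
        intro k
        by_cases hkP : n k ≤ P
        · have hne : r ≠ 1 := ne_of_lt hr1
          have hsub : r - 1 ≠ 0 := sub_ne_zero.mpr hne
          have e : ∑ N ∈ Finset.Icc (n k) P, r^N = (r^(P+1) - r^(n k))/(r-1) := by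
            rw [← Finset.Ico_add_one_right_eq_Icc]
            exact geom_sum_Ico hne (by omega)
          rw [e]
          have heq : s * ((r^(P+1) - r^(n k))/(r-1)) + r^(P+1) = r^(n k) := by
            rw [hsdef]
            field_simp
            ring
          linarith
        · push_neg at hkP
          have hemp : Finset.Icc (n k) P = ∅ := Finset.Icc_eq_empty (by omega)
          rw [hemp]
          simp only [Finset.sum_empty, mul_zero, zero_add]
          exact pow_le_pow_of_le_one hr0 hr1.le (by omega)
      have habs : ∀ k : ℕ, (0:ℝ) ≤ ‖a k‖ := fun k => norm_nonneg _
      have hIf : ∀ k, Finset.Icc (n k) P = Finset.filter (fun N => n k ≤ N) (Finset.Icc 1 P) := by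
        intro k
        ext N
        simp only [Finset.mem_Icc, Finset.mem_filter]
        have := hn k
        omega
      have hswap : ∑ k ∈ Finset.range m, ‖a k‖ * ∑ N ∈ Finset.Icc (n k) P, r^N
          = ∑ N ∈ Finset.Icc 1 P,
              (∑ k ∈ Finset.filter (fun k => n k ≤ N) (Finset.range m), ‖a k‖) * r^N := by
        calc ∑ k ∈ Finset.range m, ‖a k‖ * ∑ N ∈ Finset.Icc (n k) P, r^N
            = ∑ k ∈ Finset.range m, ∑ N ∈ Finset.Icc 1 P,
                (if n k ≤ N then ‖a k‖ * r^N else 0) := by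
              apply Finset.sum_congr rfl
              intro k _
              rw [hIf k, Finset.mul_sum, Finset.sum_filter]
          _ = ∑ N ∈ Finset.Icc 1 P, ∑ k ∈ Finset.range m,
                (if n k ≤ N then ‖a k‖ * r^N else 0) := Finset.sum_comm
          _ = ∑ N ∈ Finset.Icc 1 P,
                (∑ k ∈ Finset.filter (fun k => n k ≤ N) (Finset.range m), ‖a k‖) * r^N := by
              apply Finset.sum_congr rfl
              intro N _
              rw [Finset.sum_filter, Finset.sum_mul]
              apply Finset.sum_congr rfl
              intro k _
              by_cases h : n k ≤ N <;> simp [h]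
      have hinner : ∀ N : ℕ, 1 ≤ N →
          (∑ k ∈ Finset.filter (fun k => n k ≤ N) (Finset.range m), ‖a k‖) ≤ γ * g N := by
        intro N hN
        refine le_trans (Finset.sum_le_sum_of_subset_of_nonneg ?_ (fun i _ _ => habs i)) (hcoef N hN)
        intro k hk
        simp only [Finset.mem_filter, Finset.mem_range] at hk ⊢
        have := hk_lt k
        exact ⟨by omega, hk.2⟩
      have hmid : s * (∑ k ∈ Finset.range m, ‖a k‖ * ∑ N ∈ Finset.Icc (n k) P, r^N)
          ≤ C * v r := by
        rw [hswap]
        have h1 : ∑ N ∈ Finset.Icc 1 P,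
            (∑ k ∈ Finset.filter (fun k => n k ≤ N) (Finset.range m), ‖a k‖) * r^N
            ≤ ∑ N ∈ Finset.Icc 1 P, γ * (g N * r^N) := by
          apply Finset.sum_le_sum
          intro N hN
          have hN1 : 1 ≤ N := (Finset.mem_Icc.mp hN).1
          calc (∑ k ∈ Finset.filter (fun k => n k ≤ N) (Finset.range m), ‖a k‖) * r^N
              ≤ (γ * g N) * r^N :=
                mul_le_mul_of_nonneg_right (hinner N hN1) (pow_nonneg hr0 N)
            _ = γ * (g N * r^N) := by ring
        rw [← Finset.mul_sum] at h1
        calc s * (∑ N ∈ Finset.Icc 1 P,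
              (∑ k ∈ Finset.filter (fun k => n k ≤ N) (Finset.range m), ‖a k‖) * r^N)
            ≤ s * (γ * ∑ N ∈ Finset.Icc 1 P, g N * r^N) :=
              mul_le_mul_of_nonneg_left h1 hs0.le
          _ = γ * (s * ∑ N ∈ Finset.Icc 1 P, g N * r^N) := by ring
          _ ≤ γ * (C0 * v r) := mul_le_mul_of_nonneg_left (stepB P) hγ.le
          _ = C * v r := by rw [hCdef]; ring
      calc ∑ k ∈ Finset.range m, ‖a k‖ * r ^ (n k)
          ≤ ∑ k ∈ Finset.range m,
              (‖a k‖ * (s * (∑ N ∈ Finset.Icc (n k) P, r^N) + r^(P+1))) := by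
            apply Finset.sum_le_sum
            intro k _
            exact mul_le_mul_of_nonneg_left (hpt k) (habs k)
        _ = s * (∑ k ∈ Finset.range m, ‖a k‖ * ∑ N ∈ Finset.Icc (n k) P, r^N)
              + (∑ k ∈ Finset.range m, ‖a k‖) * r^(P+1) := by
            rw [Finset.mul_sum, Finset.sum_mul, ← Finset.sum_add_distrib]
            apply Finset.sum_congr rfl
            intro k _
            ring
        _ ≤ C * v r + (∑ k ∈ Finset.range m, ‖a k‖) * r^(P+1) :=
            add_le_add_left hmid _
    have hlim : Filter.Tendsto
        (fun P : ℕ => C * v r + (∑ k ∈ Finset.range m, ‖a k‖) * r^(P+1))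
        Filter.atTop (nhds (C * v r)) := by
      have h0 : Filter.Tendsto (fun P : ℕ => r^(P+1)) Filter.atTop (nhds 0) :=
        (tendsto_pow_atTop_nhds_zero_of_lt_one hr0 hr1).comp (Filter.tendsto_add_atTop_nat 1)
      have h1 := h0.const_mul (∑ k ∈ Finset.range m, ‖a k‖)
      have h2 := (tendsto_const_nhds (x := C * v r) (f := Filter.atTop (α := ℕ))).add h1
      simpa using h2
    exact ge_of_tendsto' hlim perP
  -- conclude
  have hnorm : ∀ (z : ℂ) (k : ℕ), ‖a k * z ^ (n k)‖ = ‖a k‖ * ‖z‖ ^ (n k) := by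
    intro z k
    rw [norm_mul, norm_pow]
  have hsummable : ∀ z ∈ Metric.ball (0:ℂ) 1, Summable (fun k : ℕ => ‖a k * z ^ (n k)‖) := by
    intro z hz
    apply summable_of_sum_range_le (c := C * v (‖z‖)) (fun k => norm_nonneg _)
    intro m
    calc ∑ k ∈ Finset.range m, ‖a k * z ^ (n k)‖
        = ∑ k ∈ Finset.range m, ‖a k‖ * ‖z‖ ^ (n k) := by
          exact Finset.sum_congr rfl fun k _ => hnorm z k
      _ ≤ C * v (‖z‖) := key z hz m
  constructor
  · intro z hz
    exact (hsummable z hz).of_norm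
  · refine ⟨C, hCpos, ?_⟩
    intro z hz
    calc |(∑' k : ℕ, a k * z ^ (n k)).re|
        ≤ ‖∑' k : ℕ, a k * z ^ (n k)‖ := Complex.abs_re_le_norm _
      _ = ‖∑' k : ℕ, a k * z ^ (n k)‖ := rfl
      _ ≤ ∑' k : ℕ, ‖a k * z ^ (n k)‖ := norm_tsum_le_tsum_norm (hsummable z hz)
      _ ≤ C * v (‖z‖) := by
          apply Real.tsum_le_of_sum_range_le (fun k => norm_nonneg _)
          intro m
          calc ∑ k ∈ Finset.range m, ‖a k * z ^ (n k)‖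
              = ∑ k ∈ Finset.range m, ‖a k‖ * ‖z‖ ^ (n k) :=
                Finset.sum_congr rfl fun k _ => hnorm z k
            _ ≤ C * v (‖z‖) := key z hz m
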